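/- Let 1 ≤ k ≤ n−1, let H ⊂ ℝ^n be a linear hyperplane (a linear subspace of dimension n−1), and let P ⊆ H be a linear subspace of dimension n−k−1. If H contains the row span of some totally positive k×n matrix, then H contains the row span V′ of a totally positive k×n matrix with V′ ∩ P = {0}. -/

import Mathlib

open Matrix

/-- The minor of a real `k × n` matrix on a set `S` of `k` columns. -/
noncomputable def minorCols {k n : ℕ} (A : Matrix (Fin k) (Fin n) ℝ)
    (S : Finset (Fin n)) (hS : S.card = k) : ℝ :=
  (A.submatrix id (fun i => ((S.orderIsoOfFin hS) i : Fin n))).det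

/-- The minor of a real `n × k` matrix on a set `S` of `k` rows. -/
noncomputable def minorRows {k n : ℕ} (B : Matrix (Fin n) (Fin k) ℝ)
    (S : Finset (Fin n)) (hS : S.card = k) : ℝ :=
  (B.submatrix (fun i => ((S.orderIsoOfFin hS) i : Fin n)) id).det

/-- A real `k × n` matrix is totally nonnegative if all its maximal (`k × k`) minors
are nonnegative. -/
def IsTotallyNonneg {k n : ℕ} (A : Matrix (Fin k) (Fin n) ℝ) : Prop :=
  ∀ (S : Finset (Fin n)) (hS : S.card = k), 0 ≤ minorCols A S hS

/-- A real `k × n` matrix is totally positive if all its maximal (`k × k`) minors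
are strictly positive. -/
def IsTotallyPos {k n : ℕ} (A : Matrix (Fin k) (Fin n) ℝ) : Prop :=
  ∀ (S : Finset (Fin n)) (hS : S.card = k), 0 < minorCols A S hS

set_option maxHeartbeats 2000000
set_option maxRecDepth 8000
set_option synthInstance.maxHeartbeats 1000000

/- ### Auxiliary lemmas -/

/-- Linear independence of the rows of a matrix in terms of `vecMul`. -/
lemma linearIndependent_rows_iff_vecMul {ι κ : Type*} [Fintype ι] [Fintype κ]
    (A : Matrix ι κ ℝ) :
    LinearIndependent ℝ (fun i => A i) ↔ ∀ v : ι → ℝ, v ᵥ* A = 0 → v = 0 := by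
  rw [Fintype.linearIndependent_iff]
  have hsum : ∀ g : ι → ℝ, (∑ i, g i • A i) = g ᵥ* A := by
    intro g
    funext j
    simp [Matrix.vecMul, dotProduct, Finset.sum_apply]
  constructor
  · intro h v hv
    funext i
    exact h v (by rw [hsum]; exact hv) i
  · intro h g hg i
    have := h g (by rw [← hsum]; exact hg)
    exact congrFun this i

/-- The Gram determinant criterion for linear independence of rows over `ℝ`. -/
lemma det_gram_ne_zero_iff {ι κ : Type*} [Fintype ι] [DecidableEq ι] [Fintype κ]
    (A : Matrix ι κ ℝ) :
    (A * Aᵀ).det ≠ 0 ↔ LinearIndependent ℝ (fun i => A i) := by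
  have key : ∀ v : ι → ℝ, v ᵥ* (A * Aᵀ) = 0 ↔ v ᵥ* A = 0 := by
    intro v
    constructor
    · intro h
      have h1 : A *ᵥ (v ᵥ* A) = 0 := by
        rw [← Matrix.vecMul_transpose, Matrix.vecMul_vecMul]
        exact h
      have h2 : (v ᵥ* A) ⬝ᵥ (v ᵥ* A) = 0 := by
        rw [← Matrix.dotProduct_mulVec, h1, dotProduct_zero]
      exact dotProduct_self_eq_zero.mp h2
    · intro h
      rw [← Matrix.vecMul_vecMul, h, Matrix.zero_vecMul]
  rw [Ne, ← Matrix.exists_vecMul_eq_zero_iff, linearIndependent_rows_iff_vecMul]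
  push_neg
  constructor
  · intro h v hv
    by_contra hne
    exact h v hne ((key v).mpr hv)
  · intro h v hvne hc
    exact hvne (h v ((key v).mp hc))

/-- Let `H ⊂ ℝ^n` be a linear hyperplane and `P ⊆ H` a subspace of
dimension `n-k-1`. If `H` contains the row span of a totally positive `k × n` matrix, then
it contains the row span of a totally positive `k × n` matrix meeting `P` trivially. -/
theorem stmt8 (k n : ℕ) (hk : 1 ≤ k) (hkn : k + 1 ≤ n)
    (H P : Submodule ℝ (Fin n → ℝ))
    (hH : Module.finrank ℝ H = n - 1) (hPH : P ≤ H)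
    (hP : Module.finrank ℝ P = n - k - 1)
    (B : Matrix (Fin k) (Fin n) ℝ) (hB : IsTotallyPos B)
    (hBH : LinearMap.range B.vecMulLinear ≤ H) :
    ∃ B' : Matrix (Fin k) (Fin n) ℝ, IsTotallyPos B' ∧
      LinearMap.range B'.vecMulLinear ≤ H ∧
      LinearMap.range B'.vecMulLinear ⊓ P = ⊥ := by
  classical
  set m : ℕ := n - k - 1 with hm
  -- a complement `W` of `P` inside `H`, obtained from a global complement via modularity
  obtain ⟨Q, hQc⟩ := Submodule.exists_isCompl P
  set W : Submodule ℝ (Fin n → ℝ) := H ⊓ Q with hWdef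
  have hWP : W ⊓ P = ⊥ := by
    refine eq_bot_iff.mpr ?_
    calc W ⊓ P ≤ Q ⊓ P := inf_le_inf_right _ inf_le_right
    _ = P ⊓ Q := inf_comm _ _
    _ = ⊥ := hQc.inf_eq_bot
  have hsup : W ⊔ P = H := by
    have h1 : (P ⊔ Q) ⊓ H = P ⊔ (Q ⊓ H) := sup_inf_assoc_of_le _ hPH
    rw [hQc.sup_eq_top, top_inf_eq] at h1
    rw [hWdef, inf_comm, sup_comm]
    exact h1.symm
  have hfinW : Module.finrank ℝ W = k := by
    have h1 := Submodule.finrank_sup_add_finrank_inf_eq W P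
    rw [hsup, hWP, hH, hP, finrank_bot] at h1
    omega
  haveI : Module.Free ℝ ↥P := Module.Free.of_divisionRing ℝ ↥P
  haveI : Module.Free ℝ ↥W := Module.Free.of_divisionRing ℝ ↥W
  let bP : Module.Basis (Fin m) ℝ ↥P := Module.finBasisOfFinrankEq ℝ ↥P hP
  let bQ : Module.Basis (Fin k) ℝ ↥W := Module.finBasisOfFinrankEq ℝ ↥W hfinW
  set p : Fin m → (Fin n → ℝ) := fun j => ((bP j : ↥P) : Fin n → ℝ) with hpdef
  set c : Fin k → (Fin n → ℝ) := fun i => ((bQ i : ↥W) : Fin n → ℝ) with hcdef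
  have hpli : LinearIndependent ℝ p :=
    bP.linearIndependent.map' P.subtype (Submodule.ker_subtype P)
  have hcli : LinearIndependent ℝ c :=
    bQ.linearIndependent.map' W.subtype (Submodule.ker_subtype W)
  have hspanp : Submodule.span ℝ (Set.range p) = P := by
    have h1 : Set.range p = ⇑P.subtype '' Set.range ⇑bP := by
      rw [← Set.range_comp]; rfl
    rw [h1, ← Submodule.map_span, bP.span_eq, Submodule.map_top, Submodule.range_subtype]
  have hspanc : Submodule.span ℝ (Set.range c) = W := by
    have h1 : Set.range c = ⇑W.subtype '' Set.range ⇑bQ := by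
      rw [← Set.range_comp]; rfl
    rw [h1, ← Submodule.map_span, bQ.span_eq, Submodule.map_top, Submodule.range_subtype]
  have hWH : W ≤ H := inf_le_left
  have hdisj : Disjoint W P := disjoint_iff.mpr hWP
  have hqli : LinearIndependent ℝ (Sum.elim c p) :=
    hcli.sum_type hpli (by rw [hspanc, hspanp]; exact hdisj)
  -- matrices
  set Cmat : Matrix (Fin k) (Fin n) ℝ := Matrix.of c with hCmat
  set q : ℝ → Matrix (Fin k ⊕ Fin m) (Fin n) ℝ :=
    fun t => Matrix.of (Sum.elim (fun i => B i + t • c i) p) with hq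
  set N : ℝ → Matrix (Fin k ⊕ Fin m) (Fin n) ℝ :=
    fun s => Matrix.of (Sum.elim (fun i => s • B i + c i) p) with hN
  set h : ℝ → ℝ := fun s => ((N s) * (N s)ᵀ).det with hh
  have hNcont : Continuous N := by
    apply continuous_matrix
    intro i l
    cases i with
    | inl i =>
      show Continuous fun s : ℝ => (s • B i + c i) l
      simp only [Pi.add_apply, Pi.smul_apply, smul_eq_mul]
      fun_prop
    | inr j => exact continuous_const
  have hcont : Continuous h := (hNcont.matrix_mul hNcont.matrix_transpose).matrix_det
  have hh0 : h 0 ≠ 0 := by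
    have hN0 : N 0 = Matrix.of (Sum.elim c p) := by
      ext i l
      cases i with
      | inl i => simp [hN]
      | inr j => simp [hN]
    show ((N 0) * (N 0)ᵀ).det ≠ 0
    rw [hN0]
    exact (det_gram_ne_zero_iff _).mpr hqli
  -- find a positive `s₀` with `h s₀ ≠ 0`
  obtain ⟨s₀, hs₀ne, hs₀pos⟩ : ∃ s₀ : ℝ, h s₀ ≠ 0 ∧ 0 < s₀ := by
    have hev : ∀ᶠ s in nhds (0 : ℝ), h s ≠ 0 := hcont.continuousAt.eventually_ne hh0
    have h2 : ∀ᶠ s in nhdsWithin (0 : ℝ) (Set.Ioi 0), h s ≠ 0 ∧ s ∈ Set.Ioi (0 : ℝ) :=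
      (eventually_nhdsWithin_of_eventually_nhds hev).and eventually_mem_nhdsWithin
    exact h2.exists
  -- the polynomial detecting independence
  set Rp : Matrix (Fin k ⊕ Fin m) (Fin n) (Polynomial ℝ) :=
    Matrix.of fun i l =>
      Polynomial.C (Matrix.of (Sum.elim (fun i' => B i') p) i l) +
        Polynomial.C (Matrix.of (Sum.elim c (0 : Fin m → Fin n → ℝ)) i l) * Polynomial.X
    with hRp
  set g : Polynomial ℝ := (Rp * Rpᵀ).det with hg
  have heval : ∀ t : ℝ, g.eval t = ((q t) * (q t)ᵀ).det := by
    intro t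
    have h1 : Rp.map (Polynomial.evalRingHom t) = q t := by
      ext i l
      cases i with
      | inl i =>
        show Polynomial.eval t (Polynomial.C (B i l) + Polynomial.C (c i l) * Polynomial.X)
          = B i l + t * c i l
        rw [Polynomial.eval_add, Polynomial.eval_mul, Polynomial.eval_C, Polynomial.eval_C,
          Polynomial.eval_X]
        ring
      | inr j =>
        show Polynomial.eval t (Polynomial.C (p j l) + Polynomial.C 0 * Polynomial.X) = p j l
        rw [Polynomial.eval_add, Polynomial.eval_mul, Polynomial.eval_C, Polynomial.eval_C,
          Polynomial.eval_X]
        ring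
    have h2 : g.eval t = (Polynomial.evalRingHom t) ((Rp * Rpᵀ).det) := rfl
    rw [h2, RingHom.map_det, RingHom.mapMatrix_apply, Matrix.map_mul,
      Matrix.transpose_map, h1]
  have hgne : g ≠ 0 := by
    intro hg0
    set t₀ : ℝ := s₀⁻¹ with ht₀def
    have ht₀ : t₀ ≠ 0 := inv_ne_zero (ne_of_gt hs₀pos)
    set d : Fin k ⊕ Fin m → ℝ := Sum.elim (fun _ => t₀) (fun _ => (1 : ℝ)) with hd
    have hq_eq : q t₀ = Matrix.diagonal d * N s₀ := by
      ext i l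
      rw [Matrix.diagonal_mul]
      cases i with
      | inl i =>
        show B i l + t₀ * c i l = t₀ * (s₀ * B i l + c i l)
        have hts : t₀ * s₀ = 1 := inv_mul_cancel₀ (ne_of_gt hs₀pos)
        rw [mul_add, ← mul_assoc, hts, one_mul, add_comm]
      | inr j =>
        show p j l = 1 * p j l
        rw [one_mul]
    have hdetd : (Matrix.diagonal d).det = t₀ ^ k := by
      rw [Matrix.det_diagonal, Fintype.prod_sum_type]
      simp [hd]
    have hdet : ((q t₀) * (q t₀)ᵀ).det = t₀ ^ k * (h s₀ * t₀ ^ k) := by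
      rw [hq_eq, Matrix.transpose_mul, Matrix.diagonal_transpose,
        Matrix.mul_assoc, ← Matrix.mul_assoc (N s₀), Matrix.det_mul, Matrix.det_mul, hdetd]
    have : g.eval t₀ = 0 := by rw [hg0]; simp
    rw [heval t₀, hdet] at this
    have ht₀k : t₀ ^ k ≠ 0 := pow_ne_zero _ ht₀
    exact hs₀ne (by
      have := mul_eq_zero.mp this
      rcases this with h' | h'
      · exact absurd h' ht₀k
      · rcases mul_eq_zero.mp h' with h'' | h''
        · exact h''
        · exact absurd h'' ht₀k)
  -- minors of `B + t • Cmat` are eventually positive near `t = 0`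
  have hminor : ∀ᶠ t in nhds (0 : ℝ),
      ∀ (S : Finset (Fin n)) (hS : S.card = k), 0 < minorCols (B + t • Cmat) S hS := by
    rw [Filter.eventually_all]
    intro S
    by_cases hS : S.card = k
    · have hcont2 : Continuous fun t : ℝ => minorCols (B + t • Cmat) S hS := by
        unfold minorCols
        apply Continuous.matrix_det
        apply continuous_matrix
        intro i j
        show Continuous fun t : ℝ =>
          (B + t • Cmat) (id i) ((S.orderIsoOfFin hS) j : Fin n)
        simp only [Matrix.add_apply, Matrix.smul_apply, smul_eq_mul, id]
        fun_prop
      have h0 : (0 : ℝ) < minorCols (B + (0 : ℝ) • Cmat) S hS := by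
        have : B + (0 : ℝ) • Cmat = B := by simp
        rw [this]
        exact hB S hS
      have hgoal : ∀ᶠ t in nhds (0 : ℝ), 0 < minorCols (B + t • Cmat) S hS :=
        (hcont2.continuousAt (x := 0)).eventually_const_lt h0
      exact hgoal.mono fun t ht hS' => ht
    · exact Filter.Eventually.of_forall fun t hS' => absurd hS' hS
  obtain ⟨δ, hδpos, hδ⟩ : ∃ δ > 0, ∀ t : ℝ, |t| < δ →
      ∀ (S : Finset (Fin n)) (hS : S.card = k), 0 < minorCols (B + t • Cmat) S hS := by
    obtain ⟨ε, hε, hε'⟩ := Metric.eventually_nhds_iff.mp hminor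
    exact ⟨ε, hε, fun t ht => hε' (by simpa [Real.dist_eq] using ht)⟩
  -- pick `t ∈ (0, δ)` avoiding the finitely many roots of `g`
  obtain ⟨t, ht⟩ :=
    ((Set.Ioo_infinite hδpos).diff (Polynomial.finite_setOf_isRoot hgne)).nonempty
  obtain ⟨⟨htpos, htδ⟩, htroot⟩ := ht
  refine ⟨B + t • Cmat, hδ t (by rwa [abs_of_pos htpos]), ?_, ?_⟩
  · -- rows lie in `H`
    rw [range_vecMulLinear]
    rw [Submodule.span_le]
    rintro x ⟨i, rfl⟩
    show B i + t • c i ∈ H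
    refine H.add_mem ?_ (H.smul_mem _ ?_)
    · apply hBH
      refine ⟨Pi.single i 1, ?_⟩
      show Pi.single i 1 ᵥ* B = B i
      exact Matrix.single_one_vecMul i B
    · exact hWH (bQ i : ↥W).2
  · -- trivial intersection with `P`
    have hdetq : ((q t) * (q t)ᵀ).det ≠ 0 := by
      rw [← heval t]
      exact fun hc => htroot hc
    have hli : LinearIndependent ℝ (fun i => q t i) := (det_gram_ne_zero_iff _).mp hdetq
    have hli' : LinearIndependent ℝ (Sum.elim (fun i => B i + t • c i) p) := hli
    obtain ⟨-, -, h3⟩ := linearIndependent_sum.mp hli'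
    have h3' : Disjoint (Submodule.span ℝ (Set.range fun i => B i + t • c i))
        (Submodule.span ℝ (Set.range p)) := by
      simpa [Sum.elim_comp_inl, Sum.elim_comp_inr] using h3
    rw [range_vecMulLinear, ← hspanp]
    exact disjoint_iff.mp h3'
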